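/- Let A ∈ ℝ^{m×m} and B ∈ ℝ^{m×p} be matrices such that the powers A^k converge to a matrix P as k → ∞, and suppose there exist C ≥ 0 and 0 ≤ ρ < 1 with ‖A^k · B‖ ≤ C·ρ^k for all k ∈ ℕ. Let (e_k)_{k ∈ ℕ} be a sequence in ℝ^p with e_k → 0, and define z_{k+1} = A z_k + B e_k from an arbitrary z_0 ∈ ℝ^m. Then z_k → P z_0 as k → ∞; that is, a linear iteration driven by a vanishing perturbation entering through directions on which the powers of A decay geometrically converges to the same limit as the unperturbed iteration. -/

import Mathlib

attribute [local instance] Matrix.normedAddCommGroup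

open Filter


lemma conv_tendsto (ρ : ℝ) (hρ0 : 0 ≤ ρ) (hρ1 : ρ < 1) (u : ℕ → ℝ)
    (hu0 : ∀ j, 0 ≤ u j) (hu : Tendsto u atTop (nhds 0)) :
    Tendsto (fun k => ∑ j ∈ Finset.range k, ρ ^ (k - 1 - j) * u j) atTop (nhds 0) := by
  have hgeo : ∀ n : ℕ, ∑ i ∈ Finset.range n, ρ ^ i ≤ (1 - ρ)⁻¹ := by
    intro n
    have := Summable.sum_le_tsum (Finset.range n) (fun i _ => pow_nonneg hρ0 i)
      (summable_geometric_of_lt_one hρ0 hρ1)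
    rwa [tsum_geometric_of_lt_one hρ0 hρ1] at this
  -- boundedness of u
  obtain ⟨U, hU⟩ : ∃ U, ∀ j, u j ≤ U := by
    obtain ⟨U, hU⟩ := hu.bddAbove_range
    exact ⟨U, fun j => hU (Set.mem_range_self j)⟩
  have hU0 : 0 ≤ U := le_trans (hu0 0) (hU 0)
  rw [Metric.tendsto_atTop]
  intro ε hε
  have h1ρ : 0 < 1 - ρ := by linarith
  set ε' : ℝ := ε * (1 - ρ) / 2 with hε'
  have hε'0 : 0 < ε' := by positivity
  obtain ⟨N₁, hN₁⟩ := (Metric.tendsto_atTop.mp hu ε' hε'0)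
  have hpow : Tendsto (fun n : ℕ => (N₁ : ℝ) * U * ρ ^ n) atTop (nhds 0) := by
    have := tendsto_pow_atTop_nhds_zero_of_lt_one hρ0 hρ1
    simpa using this.const_mul ((N₁ : ℝ) * U)
  obtain ⟨M, hM⟩ := (Metric.tendsto_atTop.mp hpow (ε / 2) (by linarith))
  refine ⟨N₁ + M + 1, fun k hk => ?_⟩
  have hkN : N₁ ≤ k := by omega
  have hS0 : 0 ≤ ∑ j ∈ Finset.range k, ρ ^ (k - 1 - j) * u j :=
    Finset.sum_nonneg fun j _ => mul_nonneg (pow_nonneg hρ0 _) (hu0 j)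
  rw [Real.dist_eq, sub_zero, abs_of_nonneg hS0]
  have hsplit : ∑ j ∈ Finset.range k, ρ ^ (k - 1 - j) * u j
      = (∑ j ∈ Finset.range N₁, ρ ^ (k - 1 - j) * u j)
        + ∑ j ∈ Finset.Ico N₁ k, ρ ^ (k - 1 - j) * u j := by
    rw [Finset.range_eq_Ico, ← Finset.sum_Ico_consecutive _ (Nat.zero_le N₁) hkN, ← Finset.range_eq_Ico]
  rw [hsplit]
  have hb1 : ∑ j ∈ Finset.range N₁, ρ ^ (k - 1 - j) * u j < ε / 2 := by
    calc ∑ j ∈ Finset.range N₁, ρ ^ (k - 1 - j) * u j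
        ≤ ∑ j ∈ Finset.range N₁, ρ ^ (k - N₁) * U := by
          refine Finset.sum_le_sum fun j hj => ?_
          have hj' : j < N₁ := Finset.mem_range.mp hj
          have hexp : k - N₁ ≤ k - 1 - j := by omega
          exact mul_le_mul (pow_le_pow_of_le_one hρ0 hρ1.le hexp) (hU j) (hu0 j)
            (pow_nonneg hρ0 _)
      _ = (N₁ : ℝ) * U * ρ ^ (k - N₁) := by
          rw [Finset.sum_const, Finset.card_range, nsmul_eq_mul]; ring
      _ < ε / 2 := by
          have := hM (k - N₁) (by omega)
          rw [Real.dist_eq, sub_zero] at this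
          calc (N₁ : ℝ) * U * ρ ^ (k - N₁) ≤ |(N₁ : ℝ) * U * ρ ^ (k - N₁)| := le_abs_self _
            _ < ε / 2 := this
  have hb2 : ∑ j ∈ Finset.Ico N₁ k, ρ ^ (k - 1 - j) * u j ≤ ε / 2 := by
    calc ∑ j ∈ Finset.Ico N₁ k, ρ ^ (k - 1 - j) * u j
        ≤ ∑ j ∈ Finset.Ico N₁ k, ρ ^ (k - 1 - j) * ε' := by
          refine Finset.sum_le_sum fun j hj => ?_
          have := hN₁ j (Finset.mem_Ico.mp hj).1
          rw [Real.dist_eq, sub_zero] at this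
          have : u j ≤ ε' := le_of_lt (lt_of_le_of_lt (le_abs_self _) this)
          exact mul_le_mul_of_nonneg_left this (pow_nonneg hρ0 _)
      _ ≤ ∑ j ∈ Finset.range k, ρ ^ (k - 1 - j) * ε' := by
          refine Finset.sum_le_sum_of_subset_of_nonneg ?_ ?_
          · rw [Finset.range_eq_Ico]; exact Finset.Ico_subset_Ico (Nat.zero_le _) le_rfl
          · intro j _ _; exact mul_nonneg (pow_nonneg hρ0 _) hε'0.le
      _ = (∑ j ∈ Finset.range k, ρ ^ j) * ε' := by
          rw [Finset.sum_mul]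
          exact Finset.sum_range_reflect (fun j => ρ ^ j * ε') k
      _ ≤ (1 - ρ)⁻¹ * ε' := mul_le_mul_of_nonneg_right (hgeo k) hε'0.le
      _ = ε / 2 := by rw [hε']; field_simp
  linarith

lemma mulVec_norm_le' {m p : ℕ} (M : Matrix (Fin m) (Fin p) ℝ) (v : Fin p → ℝ) :
    ‖M.mulVec v‖ ≤ p * ‖M‖ * ‖v‖ := by
  rcases m with _ | m
  · simp [norm_le_zero_iff.symm]
    have : M.mulVec v = 0 := Subsingleton.elim _ _
    simp [this]
    positivity
  refine (pi_norm_le_iff_of_nonneg (by positivity)).mpr fun i => ?_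
  calc ‖M.mulVec v i‖ = ‖∑ j, M i j * v j‖ := rfl
    _ ≤ ∑ j, ‖M i j * v j‖ := norm_sum_le _ _
    _ ≤ ∑ _j : Fin p, ‖M‖ * ‖v‖ := by
        refine Finset.sum_le_sum fun j _ => ?_
        rw [norm_mul]
        exact mul_le_mul (Matrix.norm_entry_le_entrywise_sup_norm M)
          (norm_le_pi_norm v j) (norm_nonneg _) (norm_nonneg _)
    _ = p * ‖M‖ * ‖v‖ := by simp [mul_assoc]

/-- A linear iteration `z_{k+1} = A z_k + B e_k` driven by a vanishing
perturbation entering through directions on which the powers of `A` decay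
geometrically converges to the limit `P z_0` of the unperturbed iteration. -/
theorem stmt_13 (m p : ℕ)
    (A : Matrix (Fin m) (Fin m) ℝ) (B : Matrix (Fin m) (Fin p) ℝ)
    (P : Matrix (Fin m) (Fin m) ℝ)
    (hP : Tendsto (fun k => A ^ k) atTop (nhds P))
    (C ρ : ℝ) (hC : 0 ≤ C) (hρ0 : 0 ≤ ρ) (hρ1 : ρ < 1)
    (hAB : ∀ k : ℕ, ‖A ^ k * B‖ ≤ C * ρ ^ k)
    (e : ℕ → Fin p → ℝ) (he : Tendsto e atTop (nhds 0))
    (z : ℕ → Fin m → ℝ)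
    (hz : ∀ k, z (k + 1) = A.mulVec (z k) + B.mulVec (e k)) :
    Tendsto z atTop (nhds (P.mulVec (z 0))) := by
  -- closed form
  have hform : ∀ k, z k = (A ^ k).mulVec (z 0)
      + ∑ j ∈ Finset.range k, (A ^ (k - 1 - j) * B).mulVec (e j) := by
    intro k
    induction k with
    | zero => simp
    | succ k ih =>
      have hmap : A.mulVec (∑ j ∈ Finset.range k, (A ^ (k - 1 - j) * B).mulVec (e j))
          = ∑ j ∈ Finset.range k, (A ^ (k - j) * B).mulVec (e j) := by
        rw [← Matrix.mulVecLin_apply, map_sum]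
        refine Finset.sum_congr rfl fun j hj => ?_
        have hj' : j < k := Finset.mem_range.mp hj
        have hkj : k - 1 - j + 1 = k - j := by omega
        rw [Matrix.mulVecLin_apply, Matrix.mulVec_mulVec, ← Matrix.mul_assoc, ← pow_succ', hkj]
      rw [hz k, ih, Matrix.mulVec_add, Matrix.mulVec_mulVec, ← pow_succ', hmap,
        Finset.sum_range_succ]
      simp [Nat.add_sub_cancel, Nat.sub_self, add_assoc]
  -- first term tends to P z0
  have hf : Tendsto (fun k => (A ^ k).mulVec (z 0)) atTop (nhds (P.mulVec (z 0))) := by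
    have hcont : Continuous fun M : Matrix (Fin m) (Fin m) ℝ => M.mulVec (z 0) :=
      continuous_id.matrix_mulVec continuous_const
    exact (hcont.tendsto P).comp hP
  -- second term tends to 0
  have hg : Tendsto (fun k => ∑ j ∈ Finset.range k, (A ^ (k - 1 - j) * B).mulVec (e j))
      atTop (nhds 0) := by
    rw [tendsto_zero_iff_norm_tendsto_zero]
    have hu : Tendsto (fun j => ‖e j‖) atTop (nhds 0) := by
      simpa using (tendsto_zero_iff_norm_tendsto_zero.mp he)
    have hS := (conv_tendsto ρ hρ0 hρ1 (fun j => ‖e j‖) (fun j => norm_nonneg _) hu).const_mul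
      ((p : ℝ) * C)
    refine squeeze_zero (fun k => norm_nonneg _) (fun k => ?_) (by simpa using hS)
    calc ‖∑ j ∈ Finset.range k, (A ^ (k - 1 - j) * B).mulVec (e j)‖
        ≤ ∑ j ∈ Finset.range k, ‖(A ^ (k - 1 - j) * B).mulVec (e j)‖ := norm_sum_le _ _
      _ ≤ ∑ j ∈ Finset.range k, (p : ℝ) * C * (ρ ^ (k - 1 - j) * ‖e j‖) := by
          refine Finset.sum_le_sum fun j _ => ?_
          calc ‖(A ^ (k - 1 - j) * B).mulVec (e j)‖
              ≤ p * ‖A ^ (k - 1 - j) * B‖ * ‖e j‖ := mulVec_norm_le' _ _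
            _ ≤ p * (C * ρ ^ (k - 1 - j)) * ‖e j‖ := by
                have := hAB (k - 1 - j)
                gcongr
            _ = (p : ℝ) * C * (ρ ^ (k - 1 - j) * ‖e j‖) := by ring
      _ = (p : ℝ) * C * ∑ j ∈ Finset.range k, ρ ^ (k - 1 - j) * ‖e j‖ := by
          rw [Finset.mul_sum]
  have := hf.add hg
  rw [add_zero] at this
  refine this.congr fun k => ?_
  exact (hform k).symm
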